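/- Let G be a finite abelian group of odd order and f, g, h : G² → ℂ with values bounded by 1 in absolute value. Then |Λ(f,g,h)| ≤ min{‖f̂‖_∞, ‖ĝ‖_∞, ‖ĥ‖_∞}, where Λ(f,g,h) := |G|^{-4} Σ_{x,y,s,t} f(x,y) g(x+s,y+t) h(x−t,y+s) and ‖·‖_∞ denotes the maximum absolute value of a Fourier coefficient over Ĝ². -/

import Mathlib

open Finset

namespace LambdaAux

variable {G : Type*} [AddCommGroup G] [Fintype G]

noncomputable def mhat (F : G × G → ℂ) (ξ ζ : AddChar G ℂ) : ℂ :=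
  ((Fintype.card G : ℂ))⁻¹ ^ 2 *
    ∑ x : G, ∑ y : G, F (x, y) * (starRingEnd ℂ) (ξ x) * (starRingEnd ℂ) (ζ y)

lemma mhat_eq (F : G × G → ℂ) (ξ ζ : AddChar G ℂ) :
    mhat F ξ ζ = ((Fintype.card G : ℂ))⁻¹ ^ 2 *
      ∑ p : G × G, F p * (starRingEnd ℂ) (ξ p.1) * (starRingEnd ℂ) (ζ p.2) := by
  rw [mhat, Fintype.sum_prod_type]

lemma hq : (Fintype.card G : ℂ) ≠ 0 := by
  exact_mod_cast Fintype.card_ne_zero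

lemma inversion (F : G × G → ℂ) (u v : G) :
    ∑ κ : AddChar G ℂ × AddChar G ℂ, mhat F κ.1 κ.2 * κ.1 u * κ.2 v = F (u, v) := by
  classical
  set q : ℂ := (Fintype.card G : ℂ) with hqdef
  simp_rw [mhat_eq, ← hqdef, mul_assoc (q⁻¹ ^ 2), ← Finset.mul_sum, Finset.sum_mul]
  rw [Finset.sum_comm]
  have step : ∀ p : G × G,
      ∑ κ : AddChar G ℂ × AddChar G ℂ,
        F p * (starRingEnd ℂ) (κ.1 p.1) * (starRingEnd ℂ) (κ.2 p.2) * κ.1 u * κ.2 v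
      = if p = (u, v) then F p * q * q else 0 := by
    intro p
    have : ∀ κ : AddChar G ℂ × AddChar G ℂ,
        F p * (starRingEnd ℂ) (κ.1 p.1) * (starRingEnd ℂ) (κ.2 p.2) * κ.1 u * κ.2 v
        = F p * (κ.1 (u - p.1)) * (κ.2 (v - p.2)) := by
      intro κ
      rw [sub_eq_add_neg, sub_eq_add_neg, AddChar.map_add_eq_mul, AddChar.map_add_eq_mul,
        AddChar.map_neg_eq_conj, AddChar.map_neg_eq_conj]
      ring
    rw [Fintype.sum_congr _ _ this]
    rw [Fintype.sum_prod_type]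
    simp_rw [mul_assoc]
    simp_rw [← Finset.mul_sum]
    rw [← Finset.sum_mul]
    rw [show (∑ ξ : AddChar G ℂ, ξ (u - p.1)) = if u - p.1 = 0 then q else 0 from
      AddChar.sum_apply_eq_ite _, show (∑ ζ : AddChar G ℂ, ζ (v - p.2)) = if v - p.2 = 0 then q else 0 from
      AddChar.sum_apply_eq_ite _]
    have e1 : u - p.1 = 0 ↔ p.1 = u := by rw [sub_eq_zero]; exact eq_comm
    have e2 : v - p.2 = 0 ↔ p.2 = v := by rw [sub_eq_zero]; exact eq_comm
    simp only [e1, e2]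
    by_cases h1 : p.1 = u <;> by_cases h2 : p.2 = v <;>
      simp [Prod.ext_iff, h1, h2] <;> ring
  simp_rw [step]
  rw [Finset.sum_ite_eq' Finset.univ ((u,v) : G × G)]
  simp only [Finset.mem_univ, if_true]
  have h0 : q ≠ 0 := hq
  field_simp


lemma mhat_sum (F : G × G → ℂ) (ξ ζ : AddChar G ℂ) :
    ∑ p : G × G, F p * (starRingEnd ℂ) (ξ p.1) * (starRingEnd ℂ) (ζ p.2)
      = (Fintype.card G : ℂ) ^ 2 * mhat F ξ ζ := by
  rw [mhat_eq, ← mul_assoc, ← mul_pow, mul_inv_cancel₀ (hq (G := G)), one_pow, one_mul]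

lemma parseval (F : G × G → ℂ) (hF : ∀ p, ‖F p‖ ≤ 1) :
    ∑ κ : AddChar G ℂ × AddChar G ℂ, ‖mhat F κ.1 κ.2‖ ^ 2 ≤ 1 := by
  classical
  set q : ℂ := (Fintype.card G : ℂ) with hqdef
  have mc : ∀ z : ℂ, z * (starRingEnd ℂ) z = ((‖z‖ ^ 2 : ℝ) : ℂ) := by
    intro z
    rw [Complex.mul_conj]
    norm_cast
    rw [Complex.normSq_eq_norm_sq]
  have key : (∑ p : G × G, F p * (starRingEnd ℂ) (F p))
      = q ^ 2 * ∑ κ : AddChar G ℂ × AddChar G ℂ,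
          mhat F κ.1 κ.2 * (starRingEnd ℂ) (mhat F κ.1 κ.2) := by
    have hinv : ∀ p : G × G,
        F p = ∑ κ : AddChar G ℂ × AddChar G ℂ, mhat F κ.1 κ.2 * κ.1 p.1 * κ.2 p.2 := by
      intro p; rw [inversion, Prod.mk.eta]
    calc ∑ p : G × G, F p * (starRingEnd ℂ) (F p)
        = ∑ p : G × G, ∑ κ : AddChar G ℂ × AddChar G ℂ,
            mhat F κ.1 κ.2 * (κ.1 p.1 * κ.2 p.2 * (starRingEnd ℂ) (F p)) := by
          refine Finset.sum_congr rfl fun p _ => ?_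
          nth_rewrite 1 [hinv p]
          rw [Finset.sum_mul]
          exact Finset.sum_congr rfl fun κ _ => by ring
      _ = ∑ κ : AddChar G ℂ × AddChar G ℂ,
            mhat F κ.1 κ.2 * ∑ p : G × G, κ.1 p.1 * κ.2 p.2 * (starRingEnd ℂ) (F p) := by
          rw [Finset.sum_comm]
          exact Finset.sum_congr rfl fun κ _ => by rw [Finset.mul_sum]
      _ = q ^ 2 * ∑ κ : AddChar G ℂ × AddChar G ℂ,
            mhat F κ.1 κ.2 * (starRingEnd ℂ) (mhat F κ.1 κ.2) := by
          rw [Finset.mul_sum]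
          refine Finset.sum_congr rfl fun κ _ => ?_
          have : ∑ p : G × G, κ.1 p.1 * κ.2 p.2 * (starRingEnd ℂ) (F p)
              = (starRingEnd ℂ) (q ^ 2 * mhat F κ.1 κ.2) := by
            rw [← mhat_sum, map_sum]
            refine Finset.sum_congr rfl fun p _ => ?_
            simp only [map_mul, RingHomCompTriple.comp_apply, RingHom.id_apply,
              Complex.conj_conj]
            ring
          rw [this, map_mul]
          have : (starRingEnd ℂ) (q ^ 2) = q ^ 2 := by
            simp [hqdef]
          rw [this]; ring
  -- pass to real numbers
  have keyR : (∑ p : G × G, ‖F p‖ ^ 2)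
      = (Fintype.card G : ℝ) ^ 2 * ∑ κ : AddChar G ℂ × AddChar G ℂ, ‖mhat F κ.1 κ.2‖ ^ 2 := by
    have := key
    simp_rw [mc] at this
    rw [← Complex.ofReal_sum, ← Complex.ofReal_sum] at this
    rw [hqdef] at this
    have h2 : ((Fintype.card G : ℂ)) ^ 2 * ((∑ κ : AddChar G ℂ × AddChar G ℂ,
        ‖mhat F κ.1 κ.2‖ ^ 2 : ℝ) : ℂ)
        = (((Fintype.card G : ℝ) ^ 2 * ∑ κ : AddChar G ℂ × AddChar G ℂ,
        ‖mhat F κ.1 κ.2‖ ^ 2 : ℝ) : ℂ) := by push_cast; ring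
    rw [h2] at this
    exact_mod_cast this
  have hb : (∑ p : G × G, ‖F p‖ ^ 2) ≤ (Fintype.card G : ℝ) ^ 2 := by
    calc ∑ p : G × G, ‖F p‖ ^ 2 ≤ ∑ _p : G × G, (1 : ℝ) :=
          Finset.sum_le_sum fun p _ => by
            have := hF p
            nlinarith [norm_nonneg (F p)]
      _ = (Fintype.card G : ℝ) ^ 2 := by
          simp [Fintype.card_prod]; ring
  have hqpos : (0 : ℝ) < (Fintype.card G : ℝ) ^ 2 := by
    positivity
  nlinarith [keyR, hb]


lemma expand_aux (P Q : G × G → ℂ) (B : ℂ) :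
    ((Fintype.card G : ℂ))⁻¹ ^ 2 * (∑ a : G × G, P a) * B *
      (((Fintype.card G : ℂ))⁻¹ ^ 2 * ∑ c : G × G, Q c)
    = ((Fintype.card G : ℂ))⁻¹ ^ 4 * ∑ a : G × G, ∑ c : G × G, P a * B * Q c := by
  rw [show ((Fintype.card G : ℂ))⁻¹ ^ 2 * (∑ a : G × G, P a) * B *
      (((Fintype.card G : ℂ))⁻¹ ^ 2 * ∑ c : G × G, Q c)
      = ((Fintype.card G : ℂ))⁻¹ ^ 4 * (B * ((∑ a : G × G, P a) * ∑ c : G × G, Q c)) from by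
    ring]
  rw [Finset.sum_mul_sum, Finset.mul_sum]
  congr 1
  refine Finset.sum_congr rfl fun a _ => ?_
  rw [Finset.mul_sum]
  exact Finset.sum_congr rfl fun c _ => by ring

lemma lambda_eq (f g h : G × G → ℂ) :
    ((Fintype.card G : ℂ))⁻¹ ^ 4 * ∑ x : G, ∑ y : G, ∑ s : G, ∑ t : G,
        f (x, y) * g (x + s, y + t) * h (x - t, y + s)
    = ∑ κ : AddChar G ℂ × AddChar G ℂ,
        mhat f ((κ.1 * κ.2)⁻¹) (κ.1 * κ.2⁻¹) * mhat g κ.1 κ.2 * mhat h κ.2 κ.1⁻¹ := by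
  classical
  have hA : (∑ x : G, ∑ y : G, ∑ s : G, ∑ t : G,
        f (x, y) * g (x + s, y + t) * h (x - t, y + s))
      = ∑ a : G × G, ∑ c : G × G, f a * g (a.1 - a.2 + c.2, a.1 + a.2 - c.1) * h c := by
    rw [← Fintype.sum_prod_type']
    refine Finset.sum_congr rfl fun a _ => ?_
    rw [← Fintype.sum_prod_type']
    refine Fintype.sum_equiv
      ⟨fun st => (a.1 - st.2, a.2 + st.1), fun c => (c.2 - a.2, a.1 - c.1), ?_, ?_⟩ _ _ ?_
    · intro st; ext <;> simp <;> abel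
    · intro c; ext <;> simp <;> abel
    · intro st
      simp only [Equiv.coe_fn_mk]
      have e1 : a.1 - a.2 + (a.2 + st.1) = a.1 + st.1 := by abel
      have e2 : a.1 + a.2 - (a.1 - st.2) = a.2 + st.2 := by abel
      rw [e1, e2, Prod.mk.eta]
  have hinv : ∀ α β : G, g (α, β)
      = ∑ κ : AddChar G ℂ × AddChar G ℂ, mhat g κ.1 κ.2 * κ.1 α * κ.2 β :=
    fun α β => (inversion g α β).symm
  have swap : ∀ (X : (G × G) → (G × G) → (AddChar G ℂ × AddChar G ℂ) → ℂ),
      (∑ a : G × G, ∑ c : G × G, ∑ κ : AddChar G ℂ × AddChar G ℂ, X a c κ)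
      = ∑ κ : AddChar G ℂ × AddChar G ℂ, ∑ a : G × G, ∑ c : G × G, X a c κ := by
    intro X
    calc (∑ a : G × G, ∑ c : G × G, ∑ κ : AddChar G ℂ × AddChar G ℂ, X a c κ)
        = ∑ a : G × G, ∑ κ : AddChar G ℂ × AddChar G ℂ, ∑ c : G × G, X a c κ :=
          Finset.sum_congr rfl fun a _ => Finset.sum_comm
      _ = _ := Finset.sum_comm
  calc ((Fintype.card G : ℂ))⁻¹ ^ 4 * ∑ x : G, ∑ y : G, ∑ s : G, ∑ t : G,
        f (x, y) * g (x + s, y + t) * h (x - t, y + s)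
      = ((Fintype.card G : ℂ))⁻¹ ^ 4 * ∑ κ : AddChar G ℂ × AddChar G ℂ,
          ∑ a : G × G, ∑ c : G × G, f a * (mhat g κ.1 κ.2 * κ.1 (a.1 - a.2 + c.2) *
            κ.2 (a.1 + a.2 - c.1)) * h c := by
        rw [hA]
        congr 1
        simp_rw [hinv, Finset.mul_sum, Finset.sum_mul]
        exact swap _
    _ = ∑ κ : AddChar G ℂ × AddChar G ℂ, ((Fintype.card G : ℂ))⁻¹ ^ 4 *
          ∑ a : G × G, ∑ c : G × G, f a * (mhat g κ.1 κ.2 * κ.1 (a.1 - a.2 + c.2) *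
            κ.2 (a.1 + a.2 - c.1)) * h c := Finset.mul_sum _ _ _
    _ = ∑ κ : AddChar G ℂ × AddChar G ℂ,
        mhat f ((κ.1 * κ.2)⁻¹) (κ.1 * κ.2⁻¹) * mhat g κ.1 κ.2 * mhat h κ.2 κ.1⁻¹ := by
        refine Finset.sum_congr rfl fun κ _ => ?_
        rw [mhat_eq f ((κ.1 * κ.2)⁻¹) (κ.1 * κ.2⁻¹), mhat_eq h κ.2 κ.1⁻¹, expand_aux]
        congr 1
        refine Finset.sum_congr rfl fun a _ => ?_
        refine Finset.sum_congr rfl fun c _ => ?_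
        simp only [map_mul, ← AddChar.map_neg_eq_conj, AddChar.inv_apply, neg_neg, AddChar.mul_apply,
          sub_eq_add_neg, AddChar.map_add_eq_mul]
        ring


lemma sq_injective (hodd : Odd (Fintype.card G)) :
    Function.Injective (fun ψ : AddChar G ℂ => ψ * ψ) := by
  have hcop : (Nat.card (AddChar G ℂ)).Coprime 2 := by
    rw [Nat.card_eq_fintype_card, AddChar.card_eq]
    exact Nat.coprime_two_right.2 hodd
  have := (powCoprime hcop).injective
  intro ψ φ hh
  apply this
  simpa [powCoprime, sq] using hh

lemma sigf_inj (hodd : Odd (Fintype.card G)) :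
    Function.Injective (fun κ : AddChar G ℂ × AddChar G ℂ => ((κ.1 * κ.2)⁻¹, κ.1 * κ.2⁻¹)) := by
  intro κ κ' he
  obtain ⟨h1, h2⟩ := Prod.ext_iff.1 he
  simp only at h1 h2
  have h1' : κ.1 * κ.2 = κ'.1 * κ'.2 := inv_injective h1
  have hsq : κ.1 * κ.1 = κ'.1 * κ'.1 := by
    calc κ.1 * κ.1 = (κ.1 * κ.2) * (κ.1 * κ.2⁻¹) := by
          rw [mul_mul_mul_comm]; simp
      _ = (κ'.1 * κ'.2) * (κ'.1 * κ'.2⁻¹) := by rw [h1', h2]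
      _ = κ'.1 * κ'.1 := by rw [mul_mul_mul_comm]; simp
  have e1 : κ.1 = κ'.1 := sq_injective hodd hsq
  have e2 : κ.2 = κ'.2 := by
    rw [e1] at h1'
    exact mul_left_cancel h1'
  exact Prod.ext e1 e2

lemma sigh_inj :
    Function.Injective (fun κ : AddChar G ℂ × AddChar G ℂ => (κ.2, κ.1⁻¹)) := by
  intro κ κ' he
  obtain ⟨h1, h2⟩ := Prod.ext_iff.1 he
  simp only at h1 h2
  exact Prod.ext (inv_injective h2) h1

lemma sum_comp_le {ι : Type*} [Fintype ι] (σ : ι → ι) (hσ : Function.Injective σ)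
    (F : ι → ℝ) (hF : ∀ i, 0 ≤ F i) : ∑ i, F (σ i) ≤ ∑ i, F i := by
  classical
  rw [← Finset.sum_image (g := σ) (f := F) (fun x _ y _ hxy => hσ hxy)]
  exact Finset.sum_le_sum_of_subset_of_nonneg (Finset.subset_univ _) fun i _ _ => hF i

lemma cs_bound {ι : Type*} [Fintype ι] (b c : ι → ℝ) (hb : ∀ i, 0 ≤ b i) (hc : ∀ i, 0 ≤ c i)
    (hb2 : ∑ i, (b i) ^ 2 ≤ 1) (hc2 : ∑ i, (c i) ^ 2 ≤ 1) : ∑ i, b i * c i ≤ 1 := by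
  have h := Finset.sum_mul_sq_le_sq_mul_sq Finset.univ b c
  have hnn : 0 ≤ ∑ i, b i * c i := Finset.sum_nonneg fun i _ => mul_nonneg (hb i) (hc i)
  have hb0 : 0 ≤ ∑ i, (b i) ^ 2 := Finset.sum_nonneg fun i _ => sq_nonneg _
  have hc0 : 0 ≤ ∑ i, (c i) ^ 2 := Finset.sum_nonneg fun i _ => sq_nonneg _
  nlinarith

lemma triple_bound {ι : Type*} [Fintype ι] [Nonempty ι] (a b c : ι → ℝ) (M : ℝ)
    (ha : ∀ i, 0 ≤ a i) (hb : ∀ i, 0 ≤ b i) (hc : ∀ i, 0 ≤ c i) (hM : ∀ i, a i ≤ M)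
    (hb2 : ∑ i, (b i) ^ 2 ≤ 1) (hc2 : ∑ i, (c i) ^ 2 ≤ 1) :
    ∑ i, a i * (b i * c i) ≤ M := by
  have hM0 : 0 ≤ M := le_trans (ha (Classical.arbitrary ι)) (hM _)
  calc ∑ i, a i * (b i * c i) ≤ ∑ i, M * (b i * c i) :=
        Finset.sum_le_sum fun i _ =>
          mul_le_mul_of_nonneg_right (hM i) (mul_nonneg (hb i) (hc i))
    _ = M * ∑ i, b i * c i := by rw [Finset.mul_sum]
    _ ≤ M * 1 := mul_le_mul_of_nonneg_left (cs_bound b c hb hc hb2 hc2) hM0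
    _ = M := mul_one M

end LambdaAux

open LambdaAux in
/-- For a finite abelian group `G` of odd order and `f,g,h : G² → ℂ`
bounded by 1, the counting form `Λ(f,g,h)` is bounded by the minimum of the `ℓ^∞`
norms of the Fourier transforms of `f`, `g`, `h` over `Ĝ²`. -/
theorem lambda_uniformity_bound (G : Type*) [AddCommGroup G] [Fintype G]
    (hodd : Odd (Fintype.card G)) (f g h : G × G → ℂ)
    (hf : ∀ p, ‖f p‖ ≤ 1) (hg : ∀ p, ‖g p‖ ≤ 1) (hh : ∀ p, ‖h p‖ ≤ 1)
    (Λ : (G × G → ℂ) → (G × G → ℂ) → (G × G → ℂ) → ℂ)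
    (hΛ : ∀ f g h, Λ f g h = ((Fintype.card G : ℂ))⁻¹ ^ 4 *
      ∑ x : G, ∑ y : G, ∑ s : G, ∑ t : G,
        f (x, y) * g (x + s, y + t) * h (x - t, y + s))
    (hat : (G × G → ℂ) → AddChar G ℂ → AddChar G ℂ → ℂ)
    (hhat : ∀ F ξ ζ, hat F ξ ζ = ((Fintype.card G : ℂ))⁻¹ ^ 2 *
      ∑ x : G, ∑ y : G, F (x, y) * (starRingEnd ℂ) (ξ x) * (starRingEnd ℂ) (ζ y)) :
    ‖Λ f g h‖ ≤ min (min (⨆ p : AddChar G ℂ × AddChar G ℂ, ‖hat f p.1 p.2‖)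
      (⨆ p : AddChar G ℂ × AddChar G ℂ, ‖hat g p.1 p.2‖))
      (⨆ p : AddChar G ℂ × AddChar G ℂ, ‖hat h p.1 p.2‖) := by
  classical
  haveI : Nonempty (AddChar G ℂ) := ⟨1⟩
  have hateq : ∀ (F : G × G → ℂ) (ξ ζ : AddChar G ℂ), hat F ξ ζ = mhat F ξ ζ := by
    intro F ξ ζ; rw [hhat, mhat]
  simp only [hateq]
  rw [hΛ, lambda_eq]
  have hS : ‖∑ κ : AddChar G ℂ × AddChar G ℂ,
        mhat f ((κ.1 * κ.2)⁻¹) (κ.1 * κ.2⁻¹) * mhat g κ.1 κ.2 * mhat h κ.2 κ.1⁻¹‖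
      ≤ ∑ κ : AddChar G ℂ × AddChar G ℂ,
        ‖mhat f ((κ.1 * κ.2)⁻¹) (κ.1 * κ.2⁻¹)‖ * ‖mhat g κ.1 κ.2‖ * ‖mhat h κ.2 κ.1⁻¹‖ := by
    refine (norm_sum_le _ _).trans (le_of_eq (Finset.sum_congr rfl fun κ _ => ?_))
    rw [norm_mul, norm_mul]
  have hsupf : ∀ p : AddChar G ℂ × AddChar G ℂ, ‖mhat f p.1 p.2‖
      ≤ ⨆ p : AddChar G ℂ × AddChar G ℂ, ‖mhat f p.1 p.2‖ :=
    fun p => le_ciSup (f := fun p : AddChar G ℂ × AddChar G ℂ => ‖mhat f p.1 p.2‖)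
      (Set.Finite.bddAbove (Set.finite_range _)) p
  have hsupg : ∀ p : AddChar G ℂ × AddChar G ℂ, ‖mhat g p.1 p.2‖
      ≤ ⨆ p : AddChar G ℂ × AddChar G ℂ, ‖mhat g p.1 p.2‖ :=
    fun p => le_ciSup (f := fun p : AddChar G ℂ × AddChar G ℂ => ‖mhat g p.1 p.2‖)
      (Set.Finite.bddAbove (Set.finite_range _)) p
  have hsuph : ∀ p : AddChar G ℂ × AddChar G ℂ, ‖mhat h p.1 p.2‖
      ≤ ⨆ p : AddChar G ℂ × AddChar G ℂ, ‖mhat h p.1 p.2‖ :=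
    fun p => le_ciSup (f := fun p : AddChar G ℂ × AddChar G ℂ => ‖mhat h p.1 p.2‖)
      (Set.Finite.bddAbove (Set.finite_range _)) p
  have pf : ∑ κ : AddChar G ℂ × AddChar G ℂ, ‖mhat f κ.1 κ.2‖ ^ 2 ≤ 1 := parseval f hf
  have pg : ∑ κ : AddChar G ℂ × AddChar G ℂ, ‖mhat g κ.1 κ.2‖ ^ 2 ≤ 1 := parseval g hg
  have ph : ∑ κ : AddChar G ℂ × AddChar G ℂ, ‖mhat h κ.1 κ.2‖ ^ 2 ≤ 1 := parseval h hh
  have pfσ : ∑ κ : AddChar G ℂ × AddChar G ℂ,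
      ‖mhat f ((κ.1 * κ.2)⁻¹) (κ.1 * κ.2⁻¹)‖ ^ 2 ≤ 1 :=
    le_trans (sum_comp_le _ (sigf_inj hodd)
      (fun p : AddChar G ℂ × AddChar G ℂ => ‖mhat f p.1 p.2‖ ^ 2) fun p => sq_nonneg _) pf
  have phσ : ∑ κ : AddChar G ℂ × AddChar G ℂ, ‖mhat h κ.2 κ.1⁻¹‖ ^ 2 ≤ 1 :=
    le_trans (sum_comp_le _ (sigh_inj)
      (fun p : AddChar G ℂ × AddChar G ℂ => ‖mhat h p.1 p.2‖ ^ 2) fun p => sq_nonneg _) ph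
  refine le_min (le_min (hS.trans ?_) (hS.trans ?_)) (hS.trans ?_)
  · calc (∑ κ : AddChar G ℂ × AddChar G ℂ,
          ‖mhat f ((κ.1 * κ.2)⁻¹) (κ.1 * κ.2⁻¹)‖ * ‖mhat g κ.1 κ.2‖ * ‖mhat h κ.2 κ.1⁻¹‖)
        = ∑ κ : AddChar G ℂ × AddChar G ℂ,
          ‖mhat f ((κ.1 * κ.2)⁻¹) (κ.1 * κ.2⁻¹)‖ * (‖mhat g κ.1 κ.2‖ * ‖mhat h κ.2 κ.1⁻¹‖) :=
          Finset.sum_congr rfl fun κ _ => by ring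
      _ ≤ _ := triple_bound _ _ _ _ (fun κ => norm_nonneg _) (fun κ => norm_nonneg _)
          (fun κ => norm_nonneg _)
          (fun κ => hsupf ((κ.1 * κ.2)⁻¹, κ.1 * κ.2⁻¹)) pg phσ
  · calc (∑ κ : AddChar G ℂ × AddChar G ℂ,
          ‖mhat f ((κ.1 * κ.2)⁻¹) (κ.1 * κ.2⁻¹)‖ * ‖mhat g κ.1 κ.2‖ * ‖mhat h κ.2 κ.1⁻¹‖)
        = ∑ κ : AddChar G ℂ × AddChar G ℂ,
          ‖mhat g κ.1 κ.2‖ * (‖mhat f ((κ.1 * κ.2)⁻¹) (κ.1 * κ.2⁻¹)‖ * ‖mhat h κ.2 κ.1⁻¹‖) :=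
          Finset.sum_congr rfl fun κ _ => by ring
      _ ≤ _ := triple_bound _ _ _ _ (fun κ => norm_nonneg _) (fun κ => norm_nonneg _)
          (fun κ => norm_nonneg _) (fun κ => hsupg κ) pfσ phσ
  · calc (∑ κ : AddChar G ℂ × AddChar G ℂ,
          ‖mhat f ((κ.1 * κ.2)⁻¹) (κ.1 * κ.2⁻¹)‖ * ‖mhat g κ.1 κ.2‖ * ‖mhat h κ.2 κ.1⁻¹‖)
        = ∑ κ : AddChar G ℂ × AddChar G ℂ,
          ‖mhat h κ.2 κ.1⁻¹‖ * (‖mhat f ((κ.1 * κ.2)⁻¹) (κ.1 * κ.2⁻¹)‖ * ‖mhat g κ.1 κ.2‖) :=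
          Finset.sum_congr rfl fun κ _ => by ring
      _ ≤ _ := triple_bound _ _ _ _ (fun κ => norm_nonneg _) (fun κ => norm_nonneg _)
          (fun κ => norm_nonneg _) (fun κ => hsuph (κ.2, κ.1⁻¹)) pfσ pg
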